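/- A right R-module M is RD-coflat if and only if for every RD-exact sequence 0 → K → L → F → 0 of right R-modules with F pure-projective, the induced sequence 0 → Hom(F,M) → Hom(L,M) → Hom(K,M) → 0 is exact. -/

import Mathlib

universe u

open MulOpposite

section RDDefs

variable (R : Type u) [Ring R]

/-- `IsTensorZero R M N l` encodes the statement `∑ mᵢ ⊗ nᵢ = 0` in the tensor product
`M ⊗_R N` of the right `R`-module `M` with the left `R`-module `N`, via the universal
property of the tensor product: every `R`-balanced biadditive map kills the sum. -/
def IsTensorZero (M N : Type u) [AddCommGroup M] [Module Rᵐᵒᵖ M]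
    [AddCommGroup N] [Module R N] (l : List (M × N)) : Prop :=
  ∀ (A : Type u) [AddCommGroup A], ∀ b : M → N → A,
    (∀ m₁ m₂ n, b (m₁ + m₂) n = b m₁ n + b m₂ n) →
    (∀ m n₁ n₂, b m (n₁ + n₂) = b m n₁ + b m n₂) →
    (∀ (r : R) (m : M) (n : N), b (op r • m) n = b m (r • n)) →
    (l.map fun p => b p.1 p.2).sum = 0

/-- A right `R`-module `M` is RD-flat if tensoring with `M` preserves exactness of all
RD-exact sequences of left `R`-modules; equivalently, for every injective linear map
`f : H → F` of left `R`-modules whose image is a relatively divisible submodule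
(`rF ∩ f(H) = r f(H)` for all `r`), the induced map `M ⊗ H → M ⊗ F` is injective. -/
def RDFlat (M : Type u) [AddCommGroup M] [Module Rᵐᵒᵖ M] : Prop :=
  ∀ (H F : Type u) [AddCommGroup H] [Module R H] [AddCommGroup F] [Module R F],
    ∀ f : H →ₗ[R] F, Function.Injective f →
    (∀ (r : R) (h : H) (y : F), f h = r • y → ∃ h' : H, h = r • h') →
    ∀ l : List (M × H),
      IsTensorZero R M F (l.map fun p => (p.1, f p.2)) → IsTensorZero R M H l

/-- A right `R`-module `N` is RD-injective if every homomorphism into `N` from a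
relatively divisible submodule of a right `R`-module extends to the whole module. -/
def RDInjective (N : Type u) [AddCommGroup N] [Module Rᵐᵒᵖ N] : Prop :=
  ∀ (K L : Type u) [AddCommGroup K] [Module Rᵐᵒᵖ K] [AddCommGroup L] [Module Rᵐᵒᵖ L],
    ∀ f : K →ₗ[Rᵐᵒᵖ] L, Function.Injective f →
    (∀ (r : R) (k : K) (y : L), f k = op r • y → ∃ k' : K, k = op r • k') →
    ∀ g : K →ₗ[Rᵐᵒᵖ] N, ∃ h : L →ₗ[Rᵐᵒᵖ] N, h.comp f = g

/-- An injective linear map `f : K → L` of right `R`-modules is pure if every finite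
system of linear equations `∑ⱼ xⱼ aᵢⱼ = kᵢ` with constants in `K` which is solvable
in `L` is solvable in `K`. -/
def IsPure {K L : Type u} [AddCommGroup K] [Module Rᵐᵒᵖ K] [AddCommGroup L]
    [Module Rᵐᵒᵖ L] (f : K →ₗ[Rᵐᵒᵖ] L) : Prop :=
  ∀ (m n : ℕ) (a : Fin m → Fin n → R) (k : Fin m → K),
    (∃ x : Fin n → L, ∀ i, (∑ j, op (a i j) • x j) = f (k i)) →
    ∃ y : Fin n → K, ∀ i, (∑ j, op (a i j) • y j) = k i

/-- A right `R`-module `M` is RD-coflat if every RD-exact sequence `0 → M → P → Q → 0`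
is pure-exact, i.e. whenever `M` embeds as a relatively divisible submodule of a right
module `P`, it is a pure submodule of `P`. -/
def RDCoflat (M : Type u) [AddCommGroup M] [Module Rᵐᵒᵖ M] : Prop :=
  ∀ (P : Type u) [AddCommGroup P] [Module Rᵐᵒᵖ P],
    ∀ f : M →ₗ[Rᵐᵒᵖ] P, Function.Injective f →
    (∀ (r : R) (x : M) (y : P), f x = op r • y → ∃ x' : M, x = op r • x') →
    IsPure R f

/-- A right `R`-module `N` is pure-injective if every homomorphism into `N` from a pure
submodule of a right `R`-module extends to the whole module. -/
def PureInjective (N : Type u) [AddCommGroup N] [Module Rᵐᵒᵖ N] : Prop :=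
  ∀ (K L : Type u) [AddCommGroup K] [Module Rᵐᵒᵖ K] [AddCommGroup L] [Module Rᵐᵒᵖ L],
    ∀ f : K →ₗ[Rᵐᵒᵖ] L, Function.Injective f → IsPure R f →
    ∀ g : K →ₗ[Rᵐᵒᵖ] N, ∃ h : L →ₗ[Rᵐᵒᵖ] N, h.comp f = g

/-- A right `R`-module `F` is pure-projective if every homomorphism from `F` to a
quotient in a pure-exact sequence lifts. -/
def PureProjective (F : Type u) [AddCommGroup F] [Module Rᵐᵒᵖ F] : Prop :=
  ∀ (L Q : Type u) [AddCommGroup L] [Module Rᵐᵒᵖ L] [AddCommGroup Q] [Module Rᵐᵒᵖ Q],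
    ∀ p : L →ₗ[Rᵐᵒᵖ] Q, Function.Surjective p → IsPure R (LinearMap.ker p).subtype →
    ∀ g : F →ₗ[Rᵐᵒᵖ] Q, ∃ h : F →ₗ[Rᵐᵒᵖ] L, p.comp h = g

/-- A right `R`-module `F` is RD-projective if every homomorphism from `F` to a
quotient in an RD-exact sequence (the kernel is a relatively divisible submodule)
lifts. -/
def RDProjective (F : Type u) [AddCommGroup F] [Module Rᵐᵒᵖ F] : Prop :=
  ∀ (L Q : Type u) [AddCommGroup L] [Module Rᵐᵒᵖ L] [AddCommGroup Q] [Module Rᵐᵒᵖ Q],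
    ∀ p : L →ₗ[Rᵐᵒᵖ] Q, Function.Surjective p →
    (∀ (r : R) (x : L), p x = 0 → (∃ y : L, x = op r • y) →
      ∃ z : L, p z = 0 ∧ x = op r • z) →
    ∀ g : F →ₗ[Rᵐᵒᵖ] Q, ∃ h : F →ₗ[Rᵐᵒᵖ] L, p.comp h = g

end RDDefs

section Aux

open MulOpposite

variable (R : Type u) [Ring R]

/-- Linear map out of a finite free module determined by images of basis vectors. -/
def genLin {L : Type u} [AddCommGroup L] [Module Rᵐᵒᵖ L] {n : ℕ} (l : Fin n → L) :
    (Fin n → Rᵐᵒᵖ) →ₗ[Rᵐᵒᵖ] L where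
  toFun c := ∑ j, c j • l j
  map_add' x y := by simp [add_smul, Finset.sum_add_distrib]
  map_smul' r x := by simp [mul_smul, Finset.smul_sum]

lemma genLin_apply {L : Type u} [AddCommGroup L] [Module Rᵐᵒᵖ L] {n : ℕ}
    (l : Fin n → L) (c : Fin n → Rᵐᵒᵖ) : genLin R l c = ∑ j, c j • l j := rfl

lemma sum_smul_single {n : ℕ} (c : Fin n → Rᵐᵒᵖ) :
    (∑ j, c j • Pi.single j (1 : Rᵐᵒᵖ)) = c := by
  funext j'
  simp [Finset.sum_apply, Pi.single_apply]

/-- Finitely presented modules are pure-projective. -/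
lemma pureProjective_fp (m n : ℕ) (a : Fin m → Fin n → R) :
    PureProjective R ((Fin n → Rᵐᵒᵖ) ⧸
      Submodule.span Rᵐᵒᵖ (Set.range fun i => fun j => op (a i j))) := by
  classical
  set T : Submodule Rᵐᵒᵖ (Fin n → Rᵐᵒᵖ) :=
    Submodule.span Rᵐᵒᵖ (Set.range fun i => fun j => op (a i j)) with hT
  intro L Q _ _ _ _ p hp hpure g
  -- choose preimages of basis vectors
  set l : Fin n → L := fun j => (hp (g (T.mkQ (Pi.single j 1)))).choose with hldef
  have hl : ∀ j, p (l j) = g (T.mkQ (Pi.single j 1)) := fun j =>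
    (hp (g (T.mkQ (Pi.single j 1)))).choose_spec
  have key : ∀ c : Fin n → Rᵐᵒᵖ, p (genLin R l c) = g (T.mkQ c) := by
    intro c
    have : (genLin R (fun j => g (T.mkQ (Pi.single j 1)))) c = g (T.mkQ c) := by
      rw [genLin_apply]
      have : (∑ j, c j • g (T.mkQ (Pi.single j 1)))
          = g (T.mkQ (∑ j, c j • Pi.single j 1)) := by
        simp
      rw [this, sum_smul_single]
    rw [← this, genLin_apply, genLin_apply]
    simp [hl]
  have hker : ∀ i, genLin R l (fun j => op (a i j)) ∈ LinearMap.ker p := by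
    intro i
    rw [LinearMap.mem_ker, key]
    have : T.mkQ (fun j => op (a i j)) = 0 := by
      rw [Submodule.mkQ_apply, Submodule.Quotient.mk_eq_zero]
      exact Submodule.subset_span ⟨i, rfl⟩
    rw [this, map_zero]
  -- solve the system in ker p
  obtain ⟨y, hy⟩ := hpure m n a (fun i => ⟨genLin R l (fun j => op (a i j)), hker i⟩)
    ⟨l, fun i => by simp [genLin_apply]⟩
  -- the lift
  have hle : T ≤ LinearMap.ker (genLin R (fun j => l j - (y j : L))) := by
    rw [hT, Submodule.span_le]
    rintro _ ⟨i, rfl⟩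
    have h2 : ((∑ j, op (a i j) • y j : LinearMap.ker p) : L)
        = ∑ j, op (a i j) • (y j : L) := by
      simp
    have h1 := congrArg (Subtype.val) (hy i)
    rw [h2] at h1
    simp only [SetLike.mem_coe, LinearMap.mem_ker, genLin_apply, smul_sub,
      Finset.sum_sub_distrib]
    rw [h1]
    simp [genLin_apply]
  refine ⟨(Submodule.liftQ T (genLin R (fun j => l j - (y j : L))) hle), ?_⟩
  refine LinearMap.ext fun z => ?_
  obtain ⟨c, rfl⟩ := Submodule.mkQ_surjective T z
  simp only [LinearMap.comp_apply, Submodule.liftQ_apply, Submodule.mkQ_apply]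
  rw [show Submodule.Quotient.mk c = T.mkQ c from rfl, ← key]
  simp only [genLin_apply, smul_sub, Finset.sum_sub_distrib, map_sub, map_sum]
  have : ∀ j, p (c j • (y j : L)) = 0 := by
    intro j
    rw [map_smul, (y j).2.out]
    · simp
  simp [this]

/-- Purity transfers along an isomorphism onto a submodule. -/
lemma isPure_transfer {M P : Type u} [AddCommGroup M] [Module Rᵐᵒᵖ M]
    [AddCommGroup P] [Module Rᵐᵒᵖ P] (ι : M →ₗ[Rᵐᵒᵖ] P) (N : Submodule Rᵐᵒᵖ P)
    (hN : ∀ z, z ∈ N ↔ z ∈ LinearMap.range ι) (h : IsPure R ι) :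
    IsPure R N.subtype := by
  classical
  intro m n a k ⟨x, hx⟩
  have hk : ∀ i, ∃ k' : M, ι k' = (k i : P) := fun i => (hN _).1 (k i).2
  choose k' hk' using hk
  obtain ⟨y, hy⟩ := h m n a k' ⟨x, fun i => by rw [hk']; exact hx i⟩
  refine ⟨fun j => ⟨ι (y j), (hN _).2 ⟨y j, rfl⟩⟩, fun i => ?_⟩
  apply Subtype.ext
  push_cast
  rw [show ∀ c : Fin n → M, (∑ j, op (a i j) • ι (c j)) = ι (∑ j, op (a i j) • c j)
    from fun c => by simp, hy i, hk']

end Aux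

/-- A right `R`-module `M` is RD-coflat if and only if for every RD-exact sequence
`0 → K → L → F → 0` of right `R`-modules with `F` pure-projective, the induced
sequence `0 → Hom(F,M) → Hom(L,M) → Hom(K,M) → 0` is exact. -/
theorem rdCoflat_iff_hom_exact (R : Type u) [Ring R]
    (M : Type u) [AddCommGroup M] [Module Rᵐᵒᵖ M] :
    RDCoflat R M ↔
      ∀ (K L F : Type u) [AddCommGroup K] [Module Rᵐᵒᵖ K] [AddCommGroup L]
        [Module Rᵐᵒᵖ L] [AddCommGroup F] [Module Rᵐᵒᵖ F],
        ∀ (f : K →ₗ[Rᵐᵒᵖ] L) (p : L →ₗ[Rᵐᵒᵖ] F),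
        Function.Injective f → Function.Surjective p →
        (∀ x : L, p x = 0 ↔ x ∈ LinearMap.range f) →
        (∀ (r : R) (k : K) (y : L), f k = op r • y → ∃ k' : K, k = op r • k') →
        PureProjective R F →
        Function.Injective (fun q : F →ₗ[Rᵐᵒᵖ] M => q.comp p) ∧
        (∀ h : L →ₗ[Rᵐᵒᵖ] M, h.comp f = 0 ↔ ∃ q : F →ₗ[Rᵐᵒᵖ] M, h = q.comp p) ∧
        Function.Surjective (fun h : L →ₗ[Rᵐᵒᵖ] M => h.comp f) := by
  constructor
  · intro hM K L F _ _ _ _ _ _ f p hf hp hker hRD hFpp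
    have hpf : ∀ x : K, p (f x) = 0 := fun x => (hker (f x)).2 ⟨x, rfl⟩
    refine ⟨?_, ?_, ?_⟩
    · -- injectivity of q ↦ q ∘ p
      intro q₁ q₂ hq
      refine LinearMap.ext fun z => ?_
      obtain ⟨x, rfl⟩ := hp z
      exact congrArg (fun t : L →ₗ[Rᵐᵒᵖ] M => t x) hq
    · -- factorization
      intro h
      constructor
      · intro h0
        have hrk : LinearMap.range f ≤ LinearMap.ker p := by
          rintro _ ⟨x, rfl⟩
          exact (hker (f x)).2 ⟨x, rfl⟩
        set pbar := Submodule.liftQ (LinearMap.range f) p hrk with hpbar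
        have hinj : Function.Injective pbar := by
          rw [← LinearMap.ker_eq_bot, Submodule.ker_liftQ_eq_bot]
          rintro x hx
          exact (hker x).1 hx
        have hsurj : Function.Surjective pbar := fun z => by
          obtain ⟨x, rfl⟩ := hp z
          exact ⟨Submodule.Quotient.mk x, rfl⟩
        set e := LinearEquiv.ofBijective pbar ⟨hinj, hsurj⟩ with he
        have hrk' : LinearMap.range f ≤ LinearMap.ker h := by
          rintro _ ⟨x, rfl⟩
          exact congrArg (fun t : K →ₗ[Rᵐᵒᵖ] M => t x) h0
        refine ⟨(Submodule.liftQ (LinearMap.range f) h hrk').comp (e.symm : F →ₗ[Rᵐᵒᵖ] _),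
          LinearMap.ext fun x => ?_⟩
        have hsx : e.symm (p x) = Submodule.Quotient.mk x := by
          rw [LinearEquiv.symm_apply_eq]
          rfl
        simp [hsx]
      · rintro ⟨q, rfl⟩
        refine LinearMap.ext fun x => ?_
        simp [hpf x]
    · -- surjectivity
      intro g
      set S : Submodule Rᵐᵒᵖ (M × L) := LinearMap.range (LinearMap.prod g (-f)) with hS
      set ι : M →ₗ[Rᵐᵒᵖ] (M × L) ⧸ S := S.mkQ.comp (LinearMap.inl Rᵐᵒᵖ M L) with hι
      set jm : L →ₗ[Rᵐᵒᵖ] (M × L) ⧸ S := S.mkQ.comp (LinearMap.inr Rᵐᵒᵖ M L) with hjm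
      have hSker : S ≤ LinearMap.ker (p.comp (LinearMap.snd Rᵐᵒᵖ M L)) := by
        rintro _ ⟨x, rfl⟩
        simp [hpf x]
      set π := Submodule.liftQ S (p.comp (LinearMap.snd Rᵐᵒᵖ M L)) hSker with hπ
      have hπι : ∀ m0 : M, π (ι m0) = 0 := fun m0 => by simp [hι, hπ]
      have hιinj : Function.Injective ι := by
        rw [injective_iff_map_eq_zero]
        intro m0 h0
        have : ((m0, (0 : L)) : M × L) ∈ S := by
          rwa [← Submodule.Quotient.mk_eq_zero]
        obtain ⟨x, hx⟩ := this
        have h1 : g x = m0 := congrArg Prod.fst hx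
        have h2 : -(f x) = 0 := congrArg Prod.snd hx
        have hx0 : x = 0 := hf (by rw [map_zero, ← neg_eq_zero]; exact h2)
        rw [← h1, hx0, map_zero]
      have hιRD : ∀ (r : R) (m0 : M) (y : (M × L) ⧸ S),
          ι m0 = op r • y → ∃ m' : M, m0 = op r • m' := by
        intro r0 m0 y hy
        obtain ⟨⟨m1, l1⟩, rfl⟩ := S.mkQ_surjective y
        have : ((m0, (0:L)) - op r0 • (m1, l1)) ∈ S := by
          rw [← Submodule.Quotient.eq]
          rw [Submodule.Quotient.mk_smul]
          simpa [hι] using hy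
        obtain ⟨x, hx⟩ := this
        have h2 : -(f x) = 0 - op r0 • l1 := congrArg Prod.snd hx
        have h1 : g x = m0 - op r0 • m1 := congrArg Prod.fst hx
        have hfx : f x = op r0 • l1 := by
          rw [← neg_neg (f x), h2]; simp
        obtain ⟨x', hx'⟩ := hRD r0 x l1 hfx
        refine ⟨m1 + g x', ?_⟩
        have : m0 = op r0 • m1 + g x := by rw [h1]; abel
        rw [this, hx', map_smul, smul_add]
      have hπker : ∀ z, z ∈ LinearMap.ker π ↔ z ∈ LinearMap.range ι := by
        intro z
        constructor
        · intro hz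
          obtain ⟨⟨m1, l1⟩, rfl⟩ := S.mkQ_surjective z
          have hz' : p l1 = 0 := hz
          obtain ⟨x, hx⟩ := (hker l1).1 hz'
          refine ⟨m1 + g x, ?_⟩
          rw [hι]
          simp only [LinearMap.comp_apply, LinearMap.inl_apply, Submodule.mkQ_apply]
          rw [Submodule.Quotient.eq]
          exact ⟨x, by apply Prod.ext <;> simp [hx]⟩
        · rintro ⟨m0, rfl⟩
          exact hπι m0
      have hpure : IsPure R (LinearMap.ker π).subtype :=
        isPure_transfer R ι (LinearMap.ker π) hπker (hM _ ι hιinj hιRD)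
      have hπsurj : Function.Surjective π := by
        intro z
        obtain ⟨x, hx⟩ := hp z
        exact ⟨S.mkQ (0, x), by simpa [hπ]⟩
      obtain ⟨s, hs⟩ := hFpp _ _ π hπsurj hpure LinearMap.id
      set e := LinearEquiv.ofInjective ι hιinj with he
      set τ : ((M × L) ⧸ S) →ₗ[Rᵐᵒᵖ] ((M × L) ⧸ S) := LinearMap.id - s.comp π with hτ
      have hτr : ∀ z, τ z ∈ LinearMap.range ι := by
        intro z
        refine (hπker _).1 ?_
        have : π (s (π z)) = π z := congrArg (fun t : F →ₗ[Rᵐᵒᵖ] F => t (π z)) hs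
        simp [hτ, this]
      set ρ : ((M × L) ⧸ S) →ₗ[Rᵐᵒᵖ] M :=
        (e.symm : LinearMap.range ι →ₗ[Rᵐᵒᵖ] M).comp
          (LinearMap.codRestrict (LinearMap.range ι) τ hτr) with hρ
      have hρι : ∀ m0 : M, ρ (ι m0) = m0 := by
        intro m0
        have hτι : τ (ι m0) = ι m0 := by
          simp [hτ, hπι m0]
        rw [hρ]
        simp only [LinearMap.comp_apply, LinearEquiv.coe_coe]
        rw [LinearEquiv.symm_apply_eq]
        apply Subtype.ext
        simp [hτι, he]
      refine ⟨ρ.comp jm, LinearMap.ext fun x => ?_⟩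
      have hjf : jm (f x) = ι (g x) := by
        rw [hι, hjm]
        simp only [LinearMap.comp_apply, LinearMap.inl_apply, LinearMap.inr_apply,
          Submodule.mkQ_apply]
        rw [Submodule.Quotient.eq]
        exact ⟨-x, by apply Prod.ext <;> simp⟩
      simp only [LinearMap.comp_apply]
      rw [hjf, hρι]
  · intro hyp P _ _ f hf hRD m n a k hsol
    classical
    obtain ⟨x, hx⟩ := hsol
    set r : Fin m → (Fin n → Rᵐᵒᵖ) := fun i => fun j => op (a i j) with hr
    set S' : Submodule Rᵐᵒᵖ (M × (Fin n → Rᵐᵒᵖ)) :=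
      Submodule.span Rᵐᵒᵖ (Set.range fun i => ((k i, -(r i)) : M × (Fin n → Rᵐᵒᵖ))) with hS'
    set T : Submodule Rᵐᵒᵖ (Fin n → Rᵐᵒᵖ) := Submodule.span Rᵐᵒᵖ (Set.range r) with hT
    set f' : M →ₗ[Rᵐᵒᵖ] (M × (Fin n → Rᵐᵒᵖ)) ⧸ S' :=
      S'.mkQ.comp (LinearMap.inl Rᵐᵒᵖ M (Fin n → Rᵐᵒᵖ)) with hf'
    set jm : (Fin n → Rᵐᵒᵖ) →ₗ[Rᵐᵒᵖ] (M × (Fin n → Rᵐᵒᵖ)) ⧸ S' :=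
      S'.mkQ.comp (LinearMap.inr Rᵐᵒᵖ M (Fin n → Rᵐᵒᵖ)) with hjm
    have hS'le : S' ≤ LinearMap.ker (T.mkQ.comp (LinearMap.snd Rᵐᵒᵖ M (Fin n → Rᵐᵒᵖ))) := by
      rw [hS', Submodule.span_le]
      rintro _ ⟨i, rfl⟩
      simp only [SetLike.mem_coe, LinearMap.mem_ker, LinearMap.comp_apply,
        LinearMap.snd_apply, Submodule.mkQ_apply]
      rw [Submodule.Quotient.mk_eq_zero]
      exact neg_mem (Submodule.subset_span ⟨i, rfl⟩)
    set p' := Submodule.liftQ S' (T.mkQ.comp (LinearMap.snd Rᵐᵒᵖ M (Fin n → Rᵐᵒᵖ))) hS'le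
      with hp'
    -- the comparison map to P
    set Φ : (M × (Fin n → Rᵐᵒᵖ)) →ₗ[Rᵐᵒᵖ] P :=
      f.comp (LinearMap.fst Rᵐᵒᵖ M (Fin n → Rᵐᵒᵖ)) +
        (genLin R x).comp (LinearMap.snd Rᵐᵒᵖ M (Fin n → Rᵐᵒᵖ)) with hΦ
    have hΦS : S' ≤ LinearMap.ker Φ := by
      rw [hS', Submodule.span_le]
      rintro _ ⟨i, rfl⟩
      simp only [SetLike.mem_coe, LinearMap.mem_ker, hΦ, LinearMap.add_apply,
        LinearMap.comp_apply, LinearMap.fst_apply, LinearMap.snd_apply, map_neg]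
      rw [genLin_apply, ← hx i]
      simp [hr]
    have hΦf' : ∀ m0 : M, Φ (m0, (0 : Fin n → Rᵐᵒᵖ)) = f m0 := by
      intro m0
      simp [hΦ, genLin_apply]
    have hf'inj : Function.Injective f' := by
      rw [injective_iff_map_eq_zero]
      intro m0 h0
      have hmem : ((m0, (0 : Fin n → Rᵐᵒᵖ))) ∈ S' := by
        rwa [← Submodule.Quotient.mk_eq_zero]
      have := hΦS hmem
      rw [LinearMap.mem_ker, hΦf'] at this
      exact hf (by rw [this, map_zero])
    have hf'RD : ∀ (r0 : R) (m0 : M) (y : (M × (Fin n → Rᵐᵒᵖ)) ⧸ S'),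
        f' m0 = op r0 • y → ∃ m' : M, m0 = op r0 • m' := by
      intro r0 m0 y hy
      obtain ⟨⟨m1, c1⟩, rfl⟩ := S'.mkQ_surjective y
      have hmem : ((m0, (0 : Fin n → Rᵐᵒᵖ)) - op r0 • (m1, c1)) ∈ S' := by
        rw [← Submodule.Quotient.eq]
        rw [Submodule.Quotient.mk_smul]
        simpa [hf'] using hy
      have := hΦS hmem
      rw [LinearMap.mem_ker, map_sub, map_smul, sub_eq_zero, hΦf'] at this
      exact hRD r0 m0 (Φ (m1, c1)) this
    have hp'surj : Function.Surjective p' := by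
      intro z
      obtain ⟨c, rfl⟩ := T.mkQ_surjective z
      exact ⟨S'.mkQ (0, c), rfl⟩
    have hjr : ∀ i, jm (r i) = f' (k i) := by
      intro i
      simp only [hjm, hf', LinearMap.comp_apply, LinearMap.inl_apply,
        LinearMap.inr_apply, Submodule.mkQ_apply]
      rw [Submodule.Quotient.eq]
      refine neg_mem_iff.1 ?_
      have : -(((0 : M), r i) - (k i, (0 : Fin n → Rᵐᵒᵖ))) = (k i, -(r i)) := by
        apply Prod.ext <;> simp
      rw [this]
      exact Submodule.subset_span ⟨i, rfl⟩
    have hkerp' : ∀ z, p' z = 0 ↔ z ∈ LinearMap.range f' := by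
      intro z
      obtain ⟨⟨m0, c⟩, rfl⟩ := S'.mkQ_surjective z
      constructor
      · intro hz
        have hcT : c ∈ T := by
          rw [hp'] at hz
          simp only [Submodule.mkQ_apply] at hz
          rw [Submodule.liftQ_apply] at hz
          simpa only [LinearMap.comp_apply, LinearMap.snd_apply, Submodule.mkQ_apply,
            Submodule.Quotient.mk_eq_zero] using hz
        have haux : ∀ c' ∈ T, S'.mkQ ((0 : M), c') ∈ LinearMap.range f' := by
          intro c' hc'
          refine Submodule.span_induction ?_ ?_ ?_ ?_ hc'
          · rintro _ ⟨i, rfl⟩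
            exact ⟨k i, (hjr i).symm⟩
          · exact ⟨0, by simp; exact (Submodule.Quotient.mk_zero S').symm⟩
          · intro c₁ c₂ _ _ h₁ h₂
            have : S'.mkQ ((0 : M), c₁ + c₂) = S'.mkQ (0, c₁) + S'.mkQ (0, c₂) := by
              rw [← map_add]; congr 1; apply Prod.ext <;> simp
            rw [this]; exact add_mem h₁ h₂
          · intro t c₁ _ h₁
            have : S'.mkQ ((0 : M), t • c₁) = t • S'.mkQ (0, c₁) := by
              rw [← map_smul]; congr 1; apply Prod.ext <;> simp
            rw [this]; exact Submodule.smul_mem _ t h₁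
        have : S'.mkQ (m0, c) = f' m0 + S'.mkQ ((0 : M), c) := by
          rw [hf']
          simp only [LinearMap.comp_apply, LinearMap.inl_apply, Submodule.mkQ_apply]
          rw [← Submodule.Quotient.mk_add]
          congr 1
          apply Prod.ext <;> simp
        rw [this]
        exact add_mem ⟨m0, rfl⟩ (haux c hcT)
      · rintro ⟨m1, hm1⟩
        rw [← hm1]
        simp [hp', hf']
    obtain ⟨_, _, hsurj⟩ := hyp M _ _ f' p' hf'inj hp'surj hkerp' hf'RD
      (pureProjective_fp R m n a)
    obtain ⟨h, hh⟩ := hsurj LinearMap.id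
    have hh' : ∀ m0 : M, h (f' m0) = m0 := fun m0 =>
      congrArg (fun t : M →ₗ[Rᵐᵒᵖ] M => t m0) hh
    refine ⟨fun j => h (jm (Pi.single j 1)), fun i => ?_⟩
    have : (∑ j, op (a i j) • h (jm (Pi.single j 1)))
        = (h.comp jm) (∑ j, op (a i j) • Pi.single j 1) := by
      rw [map_sum]
      exact Finset.sum_congr rfl fun j _ => (map_smul (h.comp jm) _ _).symm
    rw [this, LinearMap.comp_apply, show (∑ j, op (a i j) • Pi.single j (1 : Rᵐᵒᵖ)) = r i from
      sum_smul_single R (r i), hjr i, hh' (k i)]
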